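/- Let T be a power partial isometry on a Hilbert space H, P and Q the projections onto ⋂ T^n H and ⋂ T*^n H. Then the restriction of T to the subspace (1−P)QH is unitarily equivalent to S ⊗ 1 on ℓ²(ℕ) ⊗ M, where S is the unilateral shift and M = (1−TT*)QH. -/

import Mathlib

open ContinuousLinearMap


namespace PPIHelpers

local notation "⟪" x ", " y "⟫" => @inner ℂ _ _ x y

variable {H : Type*} [NormedAddCommGroup H] [InnerProductSpace ℂ H] [CompleteSpace H]

lemma sa_inner {p : H →L[ℂ] H} (hsa : IsSelfAdjoint p) (x y : H) :
    ⟪p x, y⟫ = ⟪x, p y⟫ := hsa.isSymmetric x y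

lemma norm_eq_of_inner_self_eq {x y : H} (h : ⟪x, x⟫ = ⟪y, y⟫) : ‖x‖ = ‖y‖ := by
  rw [inner_self_eq_norm_sq_to_K, inner_self_eq_norm_sq_to_K] at h
  have h2 : (‖x‖ : ℝ) ^ 2 = ‖y‖ ^ 2 := by exact_mod_cast h
  nlinarith [norm_nonneg x, norm_nonneg y]

/-- Pythagoras for a self-adjoint idempotent. -/
lemma proj_pythagoras {p : H →L[ℂ] H} (hsa : IsSelfAdjoint p) (hid : p * p = p) (z : H) :
    ‖z‖ ^ 2 = ‖p z‖ ^ 2 + ‖z - p z‖ ^ 2 := by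
  have hpp : p (p z) = p z := by
    have := congrArg (fun f => f z) hid
    simpa [mul_apply_eq_comp] using this
  have h0 : ⟪p z, p z⟫ = ⟪p z, z⟫ := by
    rw [← sa_inner hsa (p z) z, hpp]
  have horth : ⟪p z, z - p z⟫ = 0 := by
    rw [inner_sub_right, h0, sub_self]
  have hps := norm_add_sq (𝕜 := ℂ) (p z) (z - p z)
  simp only [horth, map_zero, mul_zero, add_zero, zero_add, add_sub_cancel] at hps
  linarith

lemma proj_norm_le {p : H →L[ℂ] H} (hsa : IsSelfAdjoint p) (hid : p * p = p) (z : H) :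
    ‖p z‖ ≤ ‖z‖ := by
  have h := proj_pythagoras hsa hid z
  nlinarith [norm_nonneg (p z), norm_nonneg z, sq_nonneg ‖z - p z‖, norm_nonneg (z - p z)]

/-- If a self-adjoint `Q` fixes `K` and maps into `K`, then it commutes with every
self-adjoint `B` leaving `K` invariant. -/
lemma proj_comm {Q B : H →L[ℂ] H} (hQsa : IsSelfAdjoint Q) {K : Submodule ℂ H}
    (hQfix : ∀ x ∈ K, Q x = x) (hQrange : ∀ x : H, Q x ∈ K)
    (hBsa : IsSelfAdjoint B) (hinv : ∀ x ∈ K, B x ∈ K) (x : H) :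
    Q (B x) = B (Q x) := by
  have h1 : ∀ y : H, Q (B (Q y)) = B (Q y) := fun y => hQfix _ (hinv _ (hQrange y))
  refine ext_inner_right ℂ fun y => ?_
  calc ⟪Q (B x), y⟫ = ⟪x, B (Q y)⟫ := by rw [sa_inner hQsa, sa_inner hBsa]
    _ = ⟪x, Q (B (Q y))⟫ := by rw [h1]
    _ = ⟪Q x, B (Q y)⟫ := by rw [sa_inner hQsa]
    _ = ⟪B (Q x), Q y⟫ := by rw [sa_inner hBsa]
    _ = ⟪Q (B (Q x)), y⟫ := by rw [sa_inner hQsa]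
    _ = ⟪B (Q x), y⟫ := by rw [h1]

variable (T : H →L[ℂ] H)

local notation "A" => adjoint T

lemma adj_pow (n : ℕ) : adjoint (T ^ n) = A ^ n := by
  rw [← star_eq_adjoint, star_pow, star_eq_adjoint]

variable (hT : ∀ n : ℕ, T ^ n * (adjoint T) ^ n * T ^ n = T ^ n)

section
include hT

lemma hT' (n : ℕ) : A ^ n * T ^ n * A ^ n = A ^ n := by
  have := congrArg star (hT n)
  simpa [star_mul, star_pow, star_eq_adjoint, adjoint_adjoint, mul_assoc] using this

lemma F_idem (n : ℕ) : (A ^ n * T ^ n) * (A ^ n * T ^ n) = A ^ n * T ^ n := by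
  calc (A ^ n * T ^ n) * (A ^ n * T ^ n) = A ^ n * (T ^ n * A ^ n * T ^ n) := by
        simp only [mul_assoc]
    _ = A ^ n * T ^ n := by rw [hT]

lemma E_idem (n : ℕ) : (T ^ n * A ^ n) * (T ^ n * A ^ n) = T ^ n * A ^ n := by
  calc (T ^ n * A ^ n) * (T ^ n * A ^ n) = (T ^ n * A ^ n * T ^ n) * A ^ n := by
        simp only [mul_assoc]
    _ = T ^ n * A ^ n := by rw [hT]

end

lemma F_sa (n : ℕ) : IsSelfAdjoint (A ^ n * T ^ n) := by
  rw [IsSelfAdjoint, star_mul, star_pow, star_pow, star_eq_adjoint, star_eq_adjoint,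
    adjoint_adjoint]

lemma E_sa (n : ℕ) : IsSelfAdjoint (T ^ n * A ^ n) := by
  rw [IsSelfAdjoint, star_mul, star_pow, star_pow, star_eq_adjoint, star_eq_adjoint,
    adjoint_adjoint]

section
include hT

/-- The key Halmos–Wallen identity `T F_{n+1} = F_n T`. -/
lemma key_star (n : ℕ) :
    T * (A ^ (n + 1) * T ^ (n + 1)) = (A ^ n * T ^ n) * T := by
  -- algebraic part : Fₙ T F_{n+1} = Fₙ T
  have halg : (A ^ n * T ^ n) * T * (A ^ (n + 1) * T ^ (n + 1)) = (A ^ n * T ^ n) * T := by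
    calc (A ^ n * T ^ n) * T * (A ^ (n + 1) * T ^ (n + 1))
        = A ^ n * (T ^ (n + 1) * A ^ (n + 1) * T ^ (n + 1)) := by
          rw [mul_assoc (A ^ n) (T ^ n) T, ← pow_succ]; simp only [mul_assoc]
      _ = A ^ n * T ^ (n + 1) := by rw [hT]
      _ = (A ^ n * T ^ n) * T := by rw [pow_succ, ← mul_assoc]
  -- analytic part
  ext x
  set y := (A ^ (n + 1) * T ^ (n + 1)) x with hy
  have hyfix : (A ^ (n + 1) * T ^ (n + 1)) y = y := by
    rw [hy, ← mul_apply_eq_comp, F_idem T hT]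
  have h1 : ‖(A ^ n * T ^ n) (T y)‖ = ‖y‖ := by
    refine norm_eq_of_inner_self_eq ?_
    have e1 : ⟪(A ^ n * T ^ n) (T y), (A ^ n * T ^ n) (T y)⟫
        = ⟪(A ^ n * T ^ n) (T y), T y⟫ := by
      rw [← sa_inner (F_sa T n) ((A ^ n * T ^ n) (T y)) (T y),
        ← mul_apply_eq_comp (A ^ n * T ^ n) (A ^ n * T ^ n), F_idem T hT]
    have e2 : ⟪(A ^ n * T ^ n) (T y), T y⟫ = ⟪(T ^ (n + 1)) y, (T ^ (n + 1)) y⟫ := by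
      rw [mul_apply_eq_comp, ← adj_pow, adjoint_inner_left, pow_succ, mul_apply_eq_comp]
    have e3 : ⟪(T ^ (n + 1)) y, (T ^ (n + 1)) y⟫ = ⟪y, y⟫ := by
      rw [← adjoint_inner_left, adj_pow, ← mul_apply_eq_comp, hyfix]
    rw [e1, e2, e3]
  have h2 : ‖T y‖ ≤ ‖y‖ := by
    have e0 : ‖T y‖ = ‖(A ^ 1 * T ^ 1) y‖ := by
      refine norm_eq_of_inner_self_eq ?_
      calc ⟪T y, T y⟫ = ⟪(A ^ 1 * T ^ 1) y, y⟫ := by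
            rw [mul_apply_eq_comp, pow_one, pow_one, ← adjoint_inner_left T]
        _ = ⟪(A ^ 1 * T ^ 1) y, (A ^ 1 * T ^ 1) y⟫ := by
            rw [← sa_inner (F_sa T 1) ((A ^ 1 * T ^ 1) y) y,
              ← mul_apply_eq_comp (A ^ 1 * T ^ 1) (A ^ 1 * T ^ 1), F_idem T hT]
    rw [e0]
    exact proj_norm_le (F_sa T 1) (F_idem T hT 1) y
  have h4 := proj_pythagoras (F_sa T n) (F_idem T hT n) (T y)
  have h6 : T y = (A ^ n * T ^ n) (T y) := by
    have h5 : ‖T y - (A ^ n * T ^ n) (T y)‖ = 0 := by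
      nlinarith [norm_nonneg (T y - (A ^ n * T ^ n) (T y)), norm_nonneg (T y),
        norm_nonneg y]
    exact (sub_eq_zero.mp (norm_eq_zero.mp h5))
  calc (T * (A ^ (n + 1) * T ^ (n + 1))) x = T y := by rw [mul_apply_eq_comp, ← hy]
    _ = (A ^ n * T ^ n) (T y) := h6
    _ = ((A ^ n * T ^ n) * T * (A ^ (n + 1) * T ^ (n + 1))) x := by
        rw [hy]; simp only [mul_apply_eq_comp]
    _ = ((A ^ n * T ^ n) * T) x := by rw [halg]

end

section
include hT

lemma F_shift (k n : ℕ) :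
    (A ^ k * T ^ k) * T ^ n = T ^ n * (A ^ (k + n) * T ^ (k + n)) := by
  induction n with
  | zero => simp
  | succ n ih =>
      calc (A ^ k * T ^ k) * T ^ (n + 1)
          = ((A ^ k * T ^ k) * T ^ n) * T := by rw [pow_succ, ← mul_assoc]
        _ = T ^ n * ((A ^ (k + n) * T ^ (k + n)) * T) := by rw [ih, mul_assoc]
        _ = T ^ n * (T * (A ^ (k + n + 1) * T ^ (k + n + 1))) := by
            rw [key_star T hT (k + n)]
        _ = T ^ (n + 1) * (A ^ (k + (n + 1)) * T ^ (k + (n + 1))) := by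
            rw [← mul_assoc, ← pow_succ, Nat.add_assoc]

lemma F_shift_star (k n : ℕ) :
    A ^ n * (A ^ k * T ^ k) = (A ^ (k + n) * T ^ (k + n)) * A ^ n := by
  have h := congrArg star (F_shift T hT k n)
  simp only [star_mul, star_pow, star_eq_adjoint, adjoint_adjoint] at h
  rw [← mul_assoc]
  exact h

lemma E_shift (k n : ℕ) :
    (T ^ k * A ^ k) * A ^ n = A ^ n * (T ^ (k + n) * A ^ (k + n)) := by
  have hA' : ∀ n : ℕ, A ^ n * (adjoint A) ^ n * A ^ n = A ^ n := fun n => by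
    rw [adjoint_adjoint]; exact hT' T hT n
  have := F_shift (T := A) hA' k n
  simpa [adjoint_adjoint] using this

lemma E_shift_star (k n : ℕ) :
    T ^ n * (T ^ k * A ^ k) = (T ^ (k + n) * A ^ (k + n)) * T ^ n := by
  have h := congrArg star (E_shift T hT k n)
  simp only [star_mul, star_pow, star_eq_adjoint, adjoint_adjoint] at h
  rw [← mul_assoc]
  exact h

lemma EF_comm (n m : ℕ) :
    (T ^ n * A ^ n) * (A ^ m * T ^ m) = (A ^ m * T ^ m) * (T ^ n * A ^ n) := by
  calc (T ^ n * A ^ n) * (A ^ m * T ^ m)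
      = T ^ n * (A ^ n * (A ^ m * T ^ m)) := by rw [mul_assoc]
    _ = T ^ n * ((A ^ (m + n) * T ^ (m + n)) * A ^ n) := by rw [F_shift_star T hT]
    _ = ((A ^ m * T ^ m) * T ^ n) * A ^ n := by rw [← mul_assoc, ← F_shift T hT]
    _ = (A ^ m * T ^ m) * (T ^ n * A ^ n) := by rw [mul_assoc]



end
end PPIHelpers

open PPIHelpers
set_option maxHeartbeats 1000000 in

/-- For a power partial isometry `T`, the restriction of `T` to `(1−P)QH` is
unitarily equivalent to `S ⊗ 1` on `ℓ²(ℕ) ⊗ M`, where `S` is the unilateral shift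
and `M = (1−TT*)QH`.  Here `ℓ²(ℕ) ⊗ M` is realised as `ℓ²(ℕ, M)` and `S ⊗ 1` as the
shift `(S ⊗ 1)f(0) = 0`, `(S ⊗ 1)f(n+1) = f(n)`. -/
theorem restriction_unitarily_equivalent_shift
    {H : Type*} [NormedAddCommGroup H] [InnerProductSpace ℂ H] [CompleteSpace H]
    (T : H →L[ℂ] H)
    (hT : ∀ n : ℕ, T ^ n * (adjoint T) ^ n * T ^ n = T ^ n)
    (P Q : H →L[ℂ] H)
    -- `P` is the orthogonal projection onto `⋂_{n ≥ 1} T^n H`: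
    (hPsa : IsSelfAdjoint P)
    (hPfix : ∀ x ∈ ⨅ n : ℕ, LinearMap.range ((T ^ (n + 1) : H →L[ℂ] H) : H →ₗ[ℂ] H), P x = x)
    (hPrange : ∀ x : H, P x ∈ ⨅ n : ℕ, LinearMap.range ((T ^ (n + 1) : H →L[ℂ] H) : H →ₗ[ℂ] H))
    -- `Q` is the orthogonal projection onto `⋂_{n ≥ 1} T*^n H`:
    (hQsa : IsSelfAdjoint Q)
    (hQfix : ∀ x ∈ ⨅ n : ℕ, LinearMap.range (((adjoint T) ^ (n + 1) : H →L[ℂ] H) : H →ₗ[ℂ] H), Q x = x)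
    (hQrange : ∀ x : H, Q x ∈ ⨅ n : ℕ, LinearMap.range (((adjoint T) ^ (n + 1) : H →L[ℂ] H) : H →ₗ[ℂ] H)) :
    ∃ hinv : ∀ x ∈ LinearMap.range (((1 - P) * Q : H →L[ℂ] H) : H →ₗ[ℂ] H),
        T x ∈ LinearMap.range (((1 - P) * Q : H →L[ℂ] H) : H →ₗ[ℂ] H),
      ∃ U : LinearMap.range (((1 - P) * Q : H →L[ℂ] H) : H →ₗ[ℂ] H) ≃ₗᵢ[ℂ]
          lp (fun _ : ℕ => LinearMap.range (((1 - T * adjoint T) * Q : H →L[ℂ] H) : H →ₗ[ℂ] H)) 2,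
        ∀ x : LinearMap.range (((1 - P) * Q : H →L[ℂ] H) : H →ₗ[ℂ] H),
          (U ⟨T x, hinv x x.2⟩ : ∀ n : ℕ, LinearMap.range (((1 - T * adjoint T) * Q : H →L[ℂ] H) : H →ₗ[ℂ] H)) 0
              = 0 ∧
          ∀ n : ℕ,
            (U ⟨T x, hinv x x.2⟩ :
                ∀ n : ℕ, LinearMap.range (((1 - T * adjoint T) * Q : H →L[ℂ] H) : H →ₗ[ℂ] H)) (n + 1) =
              (U x : ∀ n : ℕ, LinearMap.range (((1 - T * adjoint T) * Q : H →L[ℂ] H) : H →ₗ[ℂ] H)) n := by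
  classical
  have hadj : ∀ n : ℕ, ContinuousLinearMap.adjoint (T ^ n) = (adjoint T) ^ n := adj_pow T
  have hT'' : ∀ n : ℕ, adjoint T ^ n * T ^ n * adjoint T ^ n = adjoint T ^ n := hT' T hT
  -- range of `T^n` and `(T*)^n` via the projections `Eₙ`, `Fₙ`
  have hEfix : ∀ (n : ℕ) (x : H),
      x ∈ LinearMap.range ((T ^ n : H →L[ℂ] H) : H →ₗ[ℂ] H) ↔ (T ^ n * adjoint T ^ n) x = x := by
    intro n x
    constructor
    · rintro ⟨y, rfl⟩
      have := congrArg (fun f => f y) (hT n)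
      rw [ContinuousLinearMap.coe_coe]
      simpa [mul_apply_eq_comp] using this
    · intro h
      exact ⟨(adjoint T ^ n) x, by rw [ContinuousLinearMap.coe_coe]; simpa [mul_apply_eq_comp] using h⟩
  have hFfix : ∀ (n : ℕ) (x : H),
      x ∈ LinearMap.range ((adjoint T ^ n : H →L[ℂ] H) : H →ₗ[ℂ] H) ↔ (adjoint T ^ n * T ^ n) x = x := by
    intro n x
    constructor
    · rintro ⟨y, rfl⟩
      have := congrArg (fun f => f y) (hT'' n)
      rw [ContinuousLinearMap.coe_coe]
      simpa [mul_apply_eq_comp] using this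
    · intro h
      exact ⟨(T ^ n) x, by rw [ContinuousLinearMap.coe_coe]; simpa [mul_apply_eq_comp] using h⟩
  have hmemP : ∀ x : H, (x ∈ ⨅ n : ℕ, LinearMap.range ((T ^ (n + 1) : H →L[ℂ] H) : H →ₗ[ℂ] H)) ↔
      ∀ n, (T ^ (n + 1) * adjoint T ^ (n + 1)) x = x := by
    intro x; rw [Submodule.mem_iInf]; exact forall_congr' fun n => hEfix (n + 1) x
  have hmemQ : ∀ x : H, (x ∈ ⨅ n : ℕ, LinearMap.range ((adjoint T ^ (n + 1) : H →L[ℂ] H) : H →ₗ[ℂ] H)) ↔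
      ∀ n, (adjoint T ^ (n + 1) * T ^ (n + 1)) x = x := by
    intro x; rw [Submodule.mem_iInf]; exact forall_congr' fun n => hFfix (n + 1) x
  have hQ2 : ∀ x, Q (Q x) = Q x := fun x => hQfix _ (hQrange x)
  have hP2 : ∀ x, P (P x) = P x := fun x => hPfix _ (hPrange x)
  -- `Q` commutes with all `Eₙ`
  have hQE : ∀ (n : ℕ) (x : H),
      Q ((T ^ n * adjoint T ^ n) x) = (T ^ n * adjoint T ^ n) (Q x) := by
    intro n
    refine proj_comm hQsa hQfix hQrange (E_sa T n) ?_
    intro x hx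
    rw [hmemQ] at hx ⊢
    intro m
    have hc := congrArg (fun f => f x) (EF_comm T hT n (m + 1))
    simp only [mul_apply_eq_comp] at hc ⊢
    have hxm := hx m
    simp only [mul_apply_eq_comp] at hxm
    rw [← hc, hxm]
  -- `P` and `Q` commute
  have hPQ : ∀ x, P (Q x) = Q (P x) := by
    refine proj_comm hPsa hPfix hPrange hQsa ?_
    intro x hx
    rw [hmemP] at hx ⊢
    intro n
    rw [← hQE (n + 1) x, hx n]
  -- range of `R = (1-P)Q`
  have hRx : ∀ x, ((1 - P) * Q) x = Q x - P (Q x) := by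
    intro x; simp [mul_apply_eq_comp, ContinuousLinearMap.sub_apply, ContinuousLinearMap.one_apply]
  have hmemR : ∀ x : H, x ∈ LinearMap.range (((1 - P) * Q : H →L[ℂ] H) : H →ₗ[ℂ] H) ↔ (P x = 0 ∧ Q x = x) := by
    intro x
    constructor
    · rintro ⟨w, rfl⟩
      constructor
      · rw [ContinuousLinearMap.coe_coe, hRx, map_sub, hP2, sub_self]
      · rw [ContinuousLinearMap.coe_coe, hRx, map_sub, hQ2, ← hPQ, hQ2]
    · rintro ⟨h1, h2⟩
      exact ⟨x, by rw [ContinuousLinearMap.coe_coe, hRx, h2, h1, sub_zero]⟩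
  -- range of `G = (1-TT*)Q`
  have hGx : ∀ x, ((1 - T * adjoint T) * Q) x = Q x - T (adjoint T (Q x)) := by
    intro x; simp [mul_apply_eq_comp, ContinuousLinearMap.sub_apply, ContinuousLinearMap.one_apply]
  have hE1Q : ∀ x, Q (T (adjoint T x)) = T (adjoint T (Q x)) := by
    intro x; have := hQE 1 x; simpa [pow_one, mul_apply_eq_comp] using this
  have hE1idem : ∀ z : H, T (adjoint T (T (adjoint T z))) = T (adjoint T z) := by
    intro z
    have := congrArg (fun f => f z) (E_idem T hT 1)
    simpa [pow_one, mul_apply_eq_comp] using this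
  have hmemG : ∀ x : H, x ∈ LinearMap.range (((1 - T * adjoint T) * Q : H →L[ℂ] H) : H →ₗ[ℂ] H) ↔
      (T (adjoint T x) = 0 ∧ Q x = x) := by
    intro x
    constructor
    · rintro ⟨w, rfl⟩
      refine ⟨?_, ?_⟩
      · rw [ContinuousLinearMap.coe_coe, hGx, map_sub, map_sub, hE1idem, sub_self]
      · rw [ContinuousLinearMap.coe_coe, hGx, map_sub, hQ2, hE1Q, hQ2]
    · rintro ⟨h1, h2⟩
      exact ⟨x, by rw [ContinuousLinearMap.coe_coe, hGx, h2, h1, sub_zero]⟩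
  -- members of `QH` are fixed by all `Fₖ`
  have hMF : ∀ x : H, Q x = x → ∀ k, (adjoint T ^ k * T ^ k) x = x := by
    intro x h2 k
    cases k with
    | zero => simp
    | succ k =>
        have hxQ : x ∈ ⨅ j : ℕ, LinearMap.range ((adjoint T ^ (j + 1) : H →L[ℂ] H) : H →ₗ[ℂ] H) := by
          rw [← h2]; exact hQrange x
        exact (hmemQ x).mp hxQ k
  have hMA : ∀ x : H, T (adjoint T x) = 0 → adjoint T x = 0 := by
    intro x h1
    have h0 : (inner ℂ (adjoint T x) (adjoint T x) : ℂ) = 0 := by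
      rw [ContinuousLinearMap.adjoint_inner_left, h1, inner_zero_right]
    exact inner_self_eq_zero.mp h0
  -- `T^n` preserves `QH`
  have hQTn : ∀ (n : ℕ) (x : H), Q x = x → Q ((T ^ n) x) = (T ^ n) x := by
    intro n x h2
    have hx' : ∀ k, (adjoint T ^ k) ((T ^ k) x) = x := by
      intro k; have := hMF x h2 k; simpa [mul_apply_eq_comp] using this
    apply hQfix
    rw [hmemQ]
    intro k
    have hc := congrArg (fun f => f x) (F_shift T hT (k + 1) n)
    simp only [mul_apply_eq_comp] at hc ⊢
    rw [hc, hx' (k + 1 + n)]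
  -- vanishing of `P` from orthogonality to `∩ TⁿH`
  have hPbot : ∀ z : H,
      (∀ y : H, (∀ n, (T ^ (n + 1) * adjoint T ^ (n + 1)) y = y) → (inner ℂ z y : ℂ) = 0) →
      P z = 0 := by
    intro z hz
    have h0 : (inner ℂ (P z) (P z) : ℂ) = 0 := by
      rw [sa_inner hPsa]
      exact hz _ ((hmemP _).mp (hPrange (P z)))
    exact inner_self_eq_zero.mp h0
  -- `Tⁿ m ⊥ ∩ TᵏH` for `m` with `T* m = 0`
  have hTMP : ∀ (n : ℕ) (m : H), adjoint T m = 0 → P ((T ^ n) m) = 0 := by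
    intro n m hAm
    apply hPbot
    intro y hy
    have e1 : (inner ℂ ((T ^ n) m) y : ℂ) = inner ℂ m ((adjoint T ^ n) y) := by
      have := ContinuousLinearMap.adjoint_inner_right (T ^ n) m y
      rw [hadj] at this
      exact this.symm
    have e2 : (adjoint T ^ n) y = T ((adjoint T ^ (n + 1)) y) := by
      have h1 : (T ^ (1 + n) * adjoint T ^ (1 + n)) y = y := by
        rw [Nat.add_comm]; exact hy n
      have hc := congrArg (fun f => f y) (E_shift T hT 1 n)
      simp only [mul_apply_eq_comp, pow_one] at hc
      calc (adjoint T ^ n) y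
          = (adjoint T ^ n) ((T ^ (1 + n) * adjoint T ^ (1 + n)) y) := by rw [h1]
        _ = T (adjoint T ((adjoint T ^ n) y)) := by
            simp only [mul_apply_eq_comp] at hc ⊢
            exact hc.symm
        _ = T ((adjoint T ^ (n + 1)) y) := by
            congr 1
            rw [pow_succ', mul_apply_eq_comp]
    rw [e1, e2, ← inner_conj_symm, ← ContinuousLinearMap.adjoint_inner_right, hAm,
      inner_zero_right, map_zero]
  -- invariance of `(1-P)QH` under `T`
  have hinv : ∀ x ∈ LinearMap.range (((1 - P) * Q : H →L[ℂ] H) : H →ₗ[ℂ] H), T x ∈ LinearMap.range (((1 - P) * Q : H →L[ℂ] H) : H →ₗ[ℂ] H) := by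
    intro x hx
    rw [hmemR] at hx ⊢
    obtain ⟨hP0, hQx⟩ := hx
    refine ⟨?_, by simpa using hQTn 1 x hQx⟩
    apply hPbot
    intro y hy
    have hxbot : ∀ z : H, (∀ n, (T ^ (n + 1) * adjoint T ^ (n + 1)) z = z) →
        (inner ℂ x z : ℂ) = 0 := by
      intro z hzKP
      have hPz : P z = z := hPfix z ((hmemP z).mpr hzKP)
      calc (inner ℂ x z : ℂ) = inner ℂ x (P z) := by rw [hPz]
        _ = inner ℂ (P x) z := (sa_inner hPsa x z).symm
        _ = 0 := by rw [hP0, inner_zero_left]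
    have e1 : (inner ℂ (T x) y : ℂ) = inner ℂ x (adjoint T y) :=
      (ContinuousLinearMap.adjoint_inner_right T x y).symm
    rw [e1]
    apply hxbot
    intro n
    have hc := congrArg (fun f => f y) (E_shift T hT (n + 1) 1)
    simp only [mul_apply_eq_comp, pow_one] at hc ⊢
    rw [hc]
    have := hy (n + 1)
    simp only [mul_apply_eq_comp] at this
    rw [this]
  refine ⟨hinv, ?_⟩
  -- completeness of the two subspaces
  have hRfix : ∀ x : H, x ∈ LinearMap.range (((1 - P) * Q : H →L[ℂ] H) : H →ₗ[ℂ] H) ↔ ((1 - P) * Q) x = x := by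
    intro x
    constructor
    · intro hm
      obtain ⟨h1, h2⟩ := (hmemR x).mp hm
      rw [hRx, h2, h1, sub_zero]
    · intro h; exact ⟨x, h⟩
  have hGfix : ∀ x : H, x ∈ LinearMap.range (((1 - T * adjoint T) * Q : H →L[ℂ] H) : H →ₗ[ℂ] H) ↔
      ((1 - T * adjoint T) * Q) x = x := by
    intro x
    constructor
    · intro hm
      obtain ⟨h1, h2⟩ := (hmemG x).mp hm
      rw [hGx, h2, h1, sub_zero]
    · intro h; exact ⟨x, h⟩
  haveI instR : CompleteSpace (LinearMap.range (((1 - P) * Q : H →L[ℂ] H) : H →ₗ[ℂ] H)) := by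
    have hcl : IsClosed ((LinearMap.range (((1 - P) * Q : H →L[ℂ] H) : H →ₗ[ℂ] H) : Submodule ℂ H) : Set H) := by
      have hs : ((LinearMap.range (((1 - P) * Q : H →L[ℂ] H) : H →ₗ[ℂ] H) : Submodule ℂ H) : Set H)
          = {x | ((1 - P) * Q) x = x} := Set.ext fun x => hRfix x
      rw [hs]
      exact isClosed_eq (((1 - P) * Q).continuous) continuous_id
    exact hcl.completeSpace_coe
  haveI instG : CompleteSpace (LinearMap.range (((1 - T * adjoint T) * Q : H →L[ℂ] H) : H →ₗ[ℂ] H)) := by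
    have hcl : IsClosed ((LinearMap.range (((1 - T * adjoint T) * Q : H →L[ℂ] H) : H →ₗ[ℂ] H) : Submodule ℂ H) : Set H) := by
      have hs : ((LinearMap.range (((1 - T * adjoint T) * Q : H →L[ℂ] H) : H →ₗ[ℂ] H) : Submodule ℂ H) : Set H)
          = {x | ((1 - T * adjoint T) * Q) x = x} := Set.ext fun x => hGfix x
      rw [hs]
      exact isClosed_eq (((1 - T * adjoint T) * Q).continuous) continuous_id
    exact hcl.completeSpace_coe
    -- the isometries `Vₙ : M → (1-P)QH`, `m ↦ Tⁿ m`
  have hVmem : ∀ (n : ℕ) (m : H), m ∈ LinearMap.range (((1 - T * adjoint T) * Q : H →L[ℂ] H) : H →ₗ[ℂ] H) →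
      (T ^ n) m ∈ LinearMap.range (((1 - P) * Q : H →L[ℂ] H) : H →ₗ[ℂ] H) := by
    intro n m hm
    obtain ⟨hm1, hm2⟩ := (hmemG m).mp hm
    rw [hmemR]
    exact ⟨hTMP n m (hMA m hm1), hQTn n m hm2⟩
  have hVnorm : ∀ (n : ℕ) (m : H), m ∈ LinearMap.range (((1 - T * adjoint T) * Q : H →L[ℂ] H) : H →ₗ[ℂ] H) →
      ‖(T ^ n) m‖ = ‖m‖ := by
    intro n m hm
    obtain ⟨hm1, hm2⟩ := (hmemG m).mp hm
    refine norm_eq_of_inner_self_eq ?_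
    have e1 : (inner ℂ ((T ^ n) m) ((T ^ n) m) : ℂ) = inner ℂ m ((adjoint T ^ n) ((T ^ n) m)) := by
      have := ContinuousLinearMap.adjoint_inner_right (T ^ n) m ((T ^ n) m)
      rw [hadj] at this
      exact this.symm
    have e2 : (adjoint T ^ n) ((T ^ n) m) = m := by
      have := hMF m hm2 n; simpa [mul_apply_eq_comp] using this
    rw [e1, e2]
  have horthamb : ∀ (i j : ℕ), i < j → ∀ (v w : H), adjoint T v = 0 → Q w = w →
      (inner ℂ ((T ^ i) v) ((T ^ j) w) : ℂ) = 0 := by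
    intro i j hij v w hAv hQw
    obtain ⟨d, rfl⟩ : ∃ d, j = i + (d + 1) := ⟨j - i - 1, by omega⟩
    have e1 : (inner ℂ ((T ^ i) v) ((T ^ (i + (d + 1))) w) : ℂ)
        = inner ℂ v ((adjoint T ^ i) ((T ^ (i + (d + 1))) w)) := by
      have := ContinuousLinearMap.adjoint_inner_right (T ^ i) v ((T ^ (i + (d + 1))) w)
      rw [hadj] at this
      exact this.symm
    have e2 : (adjoint T ^ i) ((T ^ (i + (d + 1))) w) = (T ^ (d + 1)) w := by
      have hps : (T ^ (i + (d + 1))) w = (T ^ i) ((T ^ (d + 1)) w) := by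
        rw [pow_add, mul_apply_eq_comp]
      rw [hps]
      have hc := congrArg (fun f => f w) (F_shift T hT i (d + 1))
      simp only [mul_apply_eq_comp] at hc
      rw [hc]
      have := hMF w hQw (i + (d + 1))
      simp only [mul_apply_eq_comp] at this
      rw [this]
    have e3 : (T ^ (d + 1)) w = T ((T ^ d) w) := by rw [pow_succ', mul_apply_eq_comp]
    rw [e1, e2, e3, ← inner_conj_symm, ← ContinuousLinearMap.adjoint_inner_right, hAv,
      inner_zero_right, map_zero]
  let V : ∀ _ : ℕ, (LinearMap.range (((1 - T * adjoint T) * Q : H →L[ℂ] H) : H →ₗ[ℂ] H)) →ₗᵢ[ℂ]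
      (LinearMap.range (((1 - P) * Q : H →L[ℂ] H) : H →ₗ[ℂ] H)) := fun n =>
    { toLinearMap := LinearMap.codRestrict (LinearMap.range (((1 - P) * Q : H →L[ℂ] H) : H →ₗ[ℂ] H))
        (((T ^ n : H →L[ℂ] H) : H →ₗ[ℂ] H).comp
          (LinearMap.range (((1 - T * adjoint T) * Q : H →L[ℂ] H) : H →ₗ[ℂ] H)).subtype)
        (fun m => hVmem n m.1 m.2)
      norm_map' := fun m => hVnorm n m.1 m.2 }
  have hVcoe : ∀ (n : ℕ) (m : LinearMap.range (((1 - T * adjoint T) * Q : H →L[ℂ] H) : H →ₗ[ℂ] H)),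
      ((V n m : LinearMap.range (((1 - P) * Q : H →L[ℂ] H) : H →ₗ[ℂ] H)) : H) = (T ^ n) m.1 := fun n m => rfl
  have horthV : OrthogonalFamily ℂ
      (fun _ : ℕ => (LinearMap.range (((1 - T * adjoint T) * Q : H →L[ℂ] H) : H →ₗ[ℂ] H))) V := by
    intro i j hij v w
    have hv := (hmemG v.1).mp v.2
    have hw := (hmemG w.1).mp w.2
    rcases lt_or_gt_of_ne hij with h | h
    · rw [Submodule.coe_inner, hVcoe, hVcoe]
      exact horthamb i j h v.1 w.1 (hMA _ hv.1) hw.2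
    · rw [Submodule.coe_inner, hVcoe, hVcoe, ← inner_conj_symm,
        horthamb j i h w.1 v.1 (hMA _ hw.1) hv.2, map_zero]
  have htot : (⊤ : Submodule ℂ (LinearMap.range (((1 - P) * Q : H →L[ℂ] H) : H →ₗ[ℂ] H))) ≤
      (⨆ n, LinearMap.range (V n).toLinearMap).topologicalClosure := by
    rw [top_le_iff, Submodule.topologicalClosure_eq_top_iff, Submodule.eq_bot_iff]
    intro x hx
    have hamb : ∀ (n : ℕ) (m : H), m ∈ LinearMap.range (((1 - T * adjoint T) * Q : H →L[ℂ] H) : H →ₗ[ℂ] H) →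
        (inner ℂ ((T ^ n) m) (x : H) : ℂ) = 0 := by
      intro n m hm
      have hmem : (V n) ⟨m, hm⟩ ∈ ⨆ k, LinearMap.range (V k).toLinearMap :=
        Submodule.mem_iSup_of_mem n ⟨⟨m, hm⟩, rfl⟩
      have h0 := (Submodule.mem_orthogonal _ x).mp hx _ hmem
      rw [Submodule.coe_inner, hVcoe] at h0
      exact h0
    obtain ⟨hPx, hQx⟩ := (hmemR (x : H)).mp x.2
    -- `G` is self-adjoint
    have hE1Qop : Q * (T * adjoint T) = (T * adjoint T) * Q := by
      ext z
      have := hQE 1 z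
      simpa [pow_one, mul_apply_eq_comp] using this
    have hGsa : IsSelfAdjoint ((1 - T * adjoint T) * Q) := by
      have h1 : star ((1 - T * adjoint T) * Q) = Q * (1 - T * adjoint T) := by
        rw [star_mul, hQsa.star_eq, star_sub, star_one, star_mul, ← star_eq_adjoint,
          star_star, star_eq_adjoint]
      rw [IsSelfAdjoint, h1, mul_sub, sub_mul, mul_one, one_mul, hE1Qop]
    -- `G((T*)ⁿ x) = 0`
    have hGA : ∀ n : ℕ, ((1 - T * adjoint T) * Q) ((adjoint T ^ n) (x : H)) = 0 := by
      intro n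
      set u := (adjoint T ^ n) (x : H) with hu
      set g := ((1 - T * adjoint T) * Q) u with hg
      have h0 : (inner ℂ g g : ℂ) = 0 := by
        have s1 : (inner ℂ g g : ℂ) = inner ℂ u (((1 - T * adjoint T) * Q) g) := by
          rw [hg, sa_inner hGsa]
        have s2 : (inner ℂ u (((1 - T * adjoint T) * Q) g) : ℂ)
            = inner ℂ (x : H) ((T ^ n) (((1 - T * adjoint T) * Q) g)) := by
          rw [hu]
          have := ContinuousLinearMap.adjoint_inner_left (T ^ n)
            (((1 - T * adjoint T) * Q) g) (x : H)
          rw [hadj] at this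
          exact this
        rw [s1, s2, ← inner_conj_symm, hamb n (((1 - T * adjoint T) * Q) g) ⟨g, rfl⟩, map_zero]
      exact inner_self_eq_zero.mp h0
    -- `Q` fixes `(T*)ⁿ x`
    have hQA : ∀ n : ℕ, Q ((adjoint T ^ n) (x : H)) = (adjoint T ^ n) (x : H) := by
      intro n
      apply hQfix
      rw [Submodule.mem_iInf]
      intro k
      have hxQ : (x : H) ∈ ⨅ j : ℕ, LinearMap.range ((adjoint T ^ (j + 1) : H →L[ℂ] H) : H →ₗ[ℂ] H) := by
        rw [← hQx]; exact hQrange _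
      obtain ⟨v, hv⟩ := (Submodule.mem_iInf _).mp hxQ k
      refine ⟨(adjoint T ^ n) v, ?_⟩
      rw [← hv, ContinuousLinearMap.coe_coe, ← mul_apply_eq_comp, ← mul_apply_eq_comp, ← pow_add, ← pow_add, Nat.add_comm]
    have hE1A : ∀ n : ℕ, T (adjoint T ((adjoint T ^ n) (x : H))) = (adjoint T ^ n) (x : H) := by
      intro n
      have h0 := hGA n
      rw [hGx, hQA n] at h0
      exact (sub_eq_zero.mp h0).symm
    have hTA : ∀ n : ℕ, (T ^ n) ((adjoint T ^ n) (x : H)) = (x : H) := by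
      intro n
      induction n with
      | zero => simp
      | succ n ih =>
          have e1 : (adjoint T ^ n) (x : H) = T ((adjoint T ^ (n + 1)) (x : H)) := by
            rw [← hE1A n]
            congr 1
            rw [pow_succ', mul_apply_eq_comp]
          calc (T ^ (n + 1)) ((adjoint T ^ (n + 1)) (x : H))
              = (T ^ n) (T ((adjoint T ^ (n + 1)) (x : H))) := by rw [pow_succ, mul_apply_eq_comp]
            _ = (T ^ n) ((adjoint T ^ n) (x : H)) := by rw [← e1]
            _ = (x : H) := ih
    have hxKP : (x : H) ∈ ⨅ n : ℕ, LinearMap.range ((T ^ (n + 1) : H →L[ℂ] H) : H →ₗ[ℂ] H) := by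
      rw [Submodule.mem_iInf]
      intro n
      exact ⟨(adjoint T ^ (n + 1)) (x : H), hTA (n + 1)⟩
    have hfix := hPfix _ hxKP
    exact Subtype.ext (by rw [← hfix, hPx]; simp)
  have hsum : IsHilbertSum ℂ
      (fun _ : ℕ => (LinearMap.range (((1 - T * adjoint T) * Q : H →L[ℂ] H) : H →ₗ[ℂ] H))) V :=
    IsHilbertSum.mk horthV htot
  refine ⟨hsum.linearIsometryEquiv, ?_⟩
  set U := hsum.linearIsometryEquiv with hU
  have hUcomp : ∀ (y : LinearMap.range (((1 - P) * Q : H →L[ℂ] H) : H →ₗ[ℂ] H)) (n : ℕ)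
      (m : LinearMap.range (((1 - T * adjoint T) * Q : H →L[ℂ] H) : H →ₗ[ℂ] H)),
      (inner ℂ (m : H) ((((U y : lp (fun _ : ℕ =>
          LinearMap.range (((1 - T * adjoint T) * Q : H →L[ℂ] H) : H →ₗ[ℂ] H)) 2) n : LinearMap.range
          (((1 - T * adjoint T) * Q : H →L[ℂ] H) : H →ₗ[ℂ] H)) : H)) : ℂ) = inner ℂ ((T ^ n) (m : H)) (y : H) := by
    intro y n m
    have h1 := lp.inner_single_left (𝕜 := ℂ) n m (U y)
    have h2 : U.symm (lp.single 2 n m) = V n m :=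
      hsum.linearIsometryEquiv_symm_apply_single m
    have h3 : (inner ℂ (lp.single 2 n m) (U y) : ℂ) = inner ℂ (V n m) y := by
      calc (inner ℂ (lp.single 2 n m) (U y) : ℂ)
          = inner ℂ (U (U.symm (lp.single 2 n m))) (U y) := by rw [U.apply_symm_apply]
        _ = inner ℂ (U.symm (lp.single 2 n m)) y := U.inner_map_map _ _
        _ = inner ℂ (V n m) y := by rw [h2]
    calc (inner ℂ (m : H) (((U y) n : LinearMap.range (((1 - T * adjoint T) * Q : H →L[ℂ] H) : H →ₗ[ℂ] H)) : H) : ℂ)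
        = inner ℂ m ((U y) n) := (Submodule.coe_inner _ _ _).symm
      _ = inner ℂ (lp.single 2 n m) (U y) := h1.symm
      _ = inner ℂ (V n m) y := h3
      _ = inner ℂ ((T ^ n) (m : H)) (y : H) := by rw [Submodule.coe_inner, hVcoe]
  intro x
  constructor
  · have h0 : (inner ℂ ((U ⟨T x, hinv x x.2⟩ : lp (fun _ : ℕ =>
        LinearMap.range (((1 - T * adjoint T) * Q : H →L[ℂ] H) : H →ₗ[ℂ] H)) 2) 0)
        ((U ⟨T x, hinv x x.2⟩) 0) : ℂ) = 0 := by
      rw [Submodule.coe_inner]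
      have hcomp := hUcomp ⟨T x, hinv x x.2⟩ 0 ((U ⟨T x, hinv x x.2⟩) 0)
      simp only [pow_zero, ContinuousLinearMap.one_apply] at hcomp
      rw [hcomp]
      have hm := hMA _ ((hmemG _).mp ((U ⟨T x, hinv x x.2⟩) 0).2).1
      show (inner ℂ (((U ⟨T x, hinv x x.2⟩) 0 : LinearMap.range (((1 - T * adjoint T) * Q : H →L[ℂ] H) : H →ₗ[ℂ] H)) : H)
        (T (x : H)) : ℂ) = 0
      rw [← ContinuousLinearMap.adjoint_inner_left, hm, inner_zero_left]
    exact inner_self_eq_zero.mp h0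
  · intro n
    apply ext_inner_left ℂ
    intro m
    rw [Submodule.coe_inner, Submodule.coe_inner]
    rw [hUcomp ⟨T x, hinv x x.2⟩ (n + 1) m, hUcomp x n m]
    have e2 : adjoint T ((T ^ (n + 1)) (m : H)) = (T ^ n) (m : H) := by
      have hc := congrArg (fun f => f (m : H)) (F_shift T hT 1 n)
      simp only [mul_apply_eq_comp, pow_one] at hc
      have hfixm := hMF (m : H) ((hmemG _).mp m.2).2 (1 + n)
      simp only [mul_apply_eq_comp] at hfixm
      calc adjoint T ((T ^ (n + 1)) (m : H))
          = adjoint T (T ((T ^ n) (m : H))) := by rw [pow_succ', mul_apply_eq_comp]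
        _ = (T ^ n) ((adjoint T ^ (1 + n)) ((T ^ (1 + n)) (m : H))) := hc
        _ = (T ^ n) (m : H) := by rw [hfixm]
    rw [show ((⟨T x, hinv x x.2⟩ : LinearMap.range (((1 - P) * Q : H →L[ℂ] H) : H →ₗ[ℂ] H)) : H) = T (x : H) from rfl,
      ← ContinuousLinearMap.adjoint_inner_left, e2]
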